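/- Let N ≥ 1 and P ≥ 1 be integers, let δt > 0 and β > 0, and let m_k^p ≥ 0 for k ∈ {1,…,N}, p ∈ {1,…,P} with m_k^* := Σ_{p=1}^P m_k^p. Assume m_k^* > β for every k and Σ_{k=1}^N m_k^p > 0 for every p. Given real numbers u_k^{1/2} and u_k^0 for k ∈ {1,…,N}, define α_k := (u_k^{1/2} − u_k^0) / (δt · max(m_k^*, β)), λ^p := − (Σ_{k=1}^N m_k^p α_k) / (Σ_{k=1}^N m_k^p (√(2 W(u_k^{1/2})) + β)), λ̃_k := Σ_{p=1}^P m_k^p λ^p, and u_k^1 := u_k^{1/2} + δt · λ̃_k · (√(2 W(u_k^{1/2})) + β). Then Σ_{k=1}^N u_k^1 = Σ_{k=1}^N u_k^0 (the projection step exactly conserves the partition constraint). -/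

import Mathlib

open Finset

/-- The projection step of the splitting scheme exactly conserves the partition
constraint: with the regularized Lagrange multipliers, `∑ k, u1 k = ∑ k, u0 k`. -/
theorem stmt0
    (N P : ℕ) (hN : 1 ≤ N) (hP : 1 ≤ P)
    (δt β : ℝ) (hδt : 0 < δt) (hβ : 0 < β)
    (m : Fin N → Fin P → ℝ) (hmnn : ∀ k p, 0 ≤ m k p)
    (mstar : Fin N → ℝ) (hmstar : ∀ k, mstar k = ∑ p, m k p)
    (hmstarβ : ∀ k, β < mstar k)
    (hcol : ∀ p, 0 < ∑ k, m k p)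
    (W : ℝ → ℝ) (hW : ∀ s, W s = (1/2) * s^2 * (1-s)^2)
    (uhalf u0 : Fin N → ℝ)
    (α : Fin N → ℝ)
    (hα : ∀ k, α k = (uhalf k - u0 k) / (δt * max (mstar k) β))
    (lam : Fin P → ℝ)
    (hlam : ∀ p, lam p =
      - (∑ k, m k p * α k) / (∑ k, m k p * (Real.sqrt (2 * W (uhalf k)) + β)))
    (lamt : Fin N → ℝ)
    (hlamt : ∀ k, lamt k = ∑ p, m k p * lam p)
    (u1 : Fin N → ℝ)
    (hu1 : ∀ k, u1 k = uhalf k + δt * lamt k * (Real.sqrt (2 * W (uhalf k)) + β)) :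
    ∑ k, u1 k = ∑ k, u0 k := by
  set g : Fin N → ℝ := fun k => Real.sqrt (2 * W (uhalf k)) + β with hg
  have hgβ : ∀ k, β ≤ g k := fun k => by
    have := Real.sqrt_nonneg (2 * W (uhalf k))
    simp only [hg]; linarith
  have hden : ∀ p, (0:ℝ) < ∑ k, m k p * g k := by
    intro p
    have h1 : (∑ k, m k p) * β ≤ ∑ k, m k p * g k := by
      rw [Finset.sum_mul]
      exact Finset.sum_le_sum fun k _ => mul_le_mul_of_nonneg_left (hgβ k) (hmnn k p)
    have := mul_pos (hcol p) hβ
    linarith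
  have key : ∑ k, lamt k * g k = - ∑ k, mstar k * α k := by
    calc ∑ k, lamt k * g k = ∑ k, ∑ p, m k p * lam p * g k := by
          refine Finset.sum_congr rfl fun k _ => ?_
          rw [hlamt k, Finset.sum_mul]
      _ = ∑ p, lam p * ∑ k, m k p * g k := by
          rw [Finset.sum_comm]
          refine Finset.sum_congr rfl fun p _ => ?_
          rw [Finset.mul_sum]
          exact Finset.sum_congr rfl fun k _ => by ring
      _ = ∑ p, - ∑ k, m k p * α k := by
          refine Finset.sum_congr rfl fun p _ => ?_
          rw [hlam p, div_mul_cancel₀ _ (hden p).ne']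
      _ = - ∑ k, mstar k * α k := by
          rw [Finset.sum_neg_distrib, neg_inj, Finset.sum_comm]
          refine Finset.sum_congr rfl fun k _ => ?_
          rw [hmstar k, Finset.sum_mul]
  have hms : ∀ k, δt * (mstar k * α k) = uhalf k - u0 k := by
    intro k
    have hpos : 0 < mstar k := lt_trans hβ (hmstarβ k)
    rw [hα k, max_eq_left (le_of_lt (hmstarβ k))]
    field_simp
  calc ∑ k, u1 k
      = (∑ k, uhalf k) + δt * ∑ k, lamt k * g k := by
        rw [Finset.mul_sum, ← Finset.sum_add_distrib]
        refine Finset.sum_congr rfl fun k _ => ?_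
        rw [hu1 k]; ring
    _ = (∑ k, uhalf k) - ∑ k, (uhalf k - u0 k) := by
        rw [key, mul_neg, Finset.mul_sum, sub_eq_add_neg]
        congr 1
        exact neg_inj.mpr (Finset.sum_congr rfl fun k _ => hms k)
    _ = ∑ k, u0 k := by rw [Finset.sum_sub_distrib]; ring
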